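/- arXiv:1905.12092 — 2 statements merged into one kernel-verified Lean document; each statement's English description precedes it below -/
import Mathlib

section
/- If S is a representation of the quiver Q with dimension vector (s₋₁, s₀, s₁) that is locally injective (i.e., for all (λ₀,...,λ₃) ∈ ℂ⁴ away from a subset of codimension ≥ 2, the map Σλᵢfᵢ : ℂ^{s₋₁} → ℂ^{s₀} is injective) and s₋₁ ≥ 1, then s₀ ≥ s₋₁ + 1. -/
/-- A surrogate for "`S ⊆ ℂ⁴` has codimension at least 2": `S` contains no hypersurface,
i.e. no zero locus of a polynomial of positive degree is contained in `S`
(hypersurfaces have codimension 1). -/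
def HasCodimAtLeastTwo (S : Set (Fin 4 → ℂ)) : Prop :=
  ∀ p : MvPolynomial (Fin 4) ℂ, 0 < p.totalDegree →
    ¬ ({x | MvPolynomial.eval x p = 0} ⊆ S)

lemma eval_const_of_totalDegree_eq_zero (p : MvPolynomial (Fin 4) ℂ)
    (h : p.totalDegree = 0) (x : Fin 4 → ℂ) :
    MvPolynomial.eval x p = MvPolynomial.eval 0 p := by
  rw [MvPolynomial.eval_eq, MvPolynomial.eval_eq]
  apply Finset.sum_congr rfl
  intro m hm
  have hm0 : ∀ i, m i = 0 := (MvPolynomial.totalDegree_eq_zero_iff _ p).mp h m hm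
  simp [hm0]

/-- If the locus of `λ ∈ ℂ⁴` where `Σ λᵢ fᵢ : ℂ^{sm1} → ℂ^{s0}` fails to be injective
has codimension at least 2 (local injectivity), and `sm1 ≥ 1`, then `s0 ≥ sm1 + 1`. -/
theorem locally_injective_dim (sm1 s0 : ℕ) (hs : 1 ≤ sm1)
    (f : Fin 4 → Matrix (Fin s0) (Fin sm1) ℂ)
    (hloc : HasCodimAtLeastTwo
      {lam : Fin 4 → ℂ | ¬ Function.Injective
        (Matrix.mulVecLin (∑ i : Fin 4, lam i • f i))}) :
    sm1 + 1 ≤ s0 := by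
  by_contra hcon
  push_neg at hcon
  have hle : s0 ≤ sm1 := Nat.lt_succ_iff.mp hcon
  rcases lt_or_eq_of_le hle with hlt | heq
  · -- s0 < sm1 : never injective
    refine hloc (MvPolynomial.X 0) (by simp) ?_
    intro x _
    intro hinj
    have h1 := LinearMap.finrank_le_finrank_of_injective hinj
    simp only [Module.finrank_fintype_fun_eq_card, Fintype.card_fin] at h1
    omega
  · -- s0 = sm1 : square case, use the determinant polynomial
    subst heq
    haveI : Nonempty (Fin s0) := ⟨⟨0, hs⟩⟩
    set P : MvPolynomial (Fin 4) ℂ :=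
      (Matrix.of fun i j : Fin s0 =>
        ∑ k : Fin 4, MvPolynomial.X k * MvPolynomial.C ((f k) i j)).det with hP
    have key : ∀ x : Fin 4 → ℂ,
        MvPolynomial.eval x P = (∑ k : Fin 4, x k • f k).det := by
      intro x
      rw [hP, RingHom.map_det]
      congr 1
      ext i j
      simp [Matrix.sum_apply]
    have noninj : ∀ x : Fin 4 → ℂ, MvPolynomial.eval x P = 0 →
        ¬ Function.Injective (Matrix.mulVecLin (∑ k : Fin 4, x k • f k)) := by
      intro x hx hinj
      rw [key] at hx
      obtain ⟨v, hv, hmv⟩ := Matrix.exists_mulVec_eq_zero_iff.mpr hx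
      apply hv
      apply hinj
      simp only [Matrix.mulVecLin_apply, hmv, Matrix.mulVec_zero]
    rcases Nat.eq_zero_or_pos P.totalDegree with h0 | hpos
    · -- constant determinant: it is identically zero (value at 0 is det 0 = 0)
      have hzero : ∀ x : Fin 4 → ℂ, MvPolynomial.eval x P = 0 := by
        intro x
        rw [eval_const_of_totalDegree_eq_zero P h0 x, key]
        simp
      refine hloc (MvPolynomial.X 0) (by simp) ?_
      intro x _
      exact noninj x (hzero x)
    · exact hloc P hpos fun x hx => noninj x hx
end

section
/- If a representation R of the quiver Q with dimension vector (a,b,c), c ≥ 1, is globally surjective (for every nonzero (λ₀,...,λ₃) ∈ ℂ⁴, Σλᵢgᵢ : ℂ^b → ℂ^c is surjective), then b ≥ c + 3. -/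
noncomputable section

namespace GlobSurjAux

open MvPolynomial Finsupp

variable {c : ℕ}

/-- index type of variables: 4 lambda's and c v's -/
abbrev σt (c : ℕ) := Fin 4 ⊕ Fin c

abbrev Rc (c : ℕ) := MvPolynomial (σt c) ℂ

/-- the bigrading weight -/
def wt (c : ℕ) : σt c → ℕ × ℕ := Sum.elim (fun _ => (1,0)) (fun _ => (0,1))

/-- Segre generators -/
def z (c : ℕ) (p : Fin 4 × Fin c) : Rc c := X (Sum.inl p.1) * X (Sum.inr p.2)

lemma weight_fst (u : σt c →₀ ℕ) :
    (weight (wt c) u).1 = ∑ i : Fin 4, u (Sum.inl i) := by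
  rw [weight_apply, Finsupp.sum_fintype _ _ (fun i => by simp)]
  rw [Fintype.sum_sum_type]
  simp [wt, Prod.fst_sum]

lemma weight_snd (u : σt c →₀ ℕ) :
    (weight (wt c) u).2 = ∑ j : Fin c, u (Sum.inr j) := by
  rw [weight_apply, Finsupp.sum_fintype _ _ (fun i => by simp)]
  rw [Fintype.sum_sum_type]
  simp [wt, Prod.snd_sum]

lemma z_hom (p : Fin 4 × Fin c) : IsWeightedHomogeneous (wt c) (z c p) (1,1) := by
  have h1 : IsWeightedHomogeneous (wt c) (X (Sum.inl p.1) : Rc c) ((1,0) : ℕ × ℕ) :=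
    isWeightedHomogeneous_X ℂ (wt c) (Sum.inl p.1)
  have h2 : IsWeightedHomogeneous (wt c) (X (Sum.inr p.2) : Rc c) ((0,1) : ℕ × ℕ) :=
    isWeightedHomogeneous_X ℂ (wt c) (Sum.inr p.2)
  have := h1.mul h2
  simpa [z] using this

/-- the set of "monomials of degree e in the Segre generators" -/
def Mon (c e : ℕ) : Set (Rc c) :=
  {f | ∃ m : Multiset (Fin 4 × Fin c), Multiset.card m = e ∧ f = (m.map (z c)).prod}

lemma Mon_hom {e : ℕ} {f : Rc c} (hf : f ∈ Mon c e) :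
    IsWeightedHomogeneous (wt c) f (e, e) := by
  obtain ⟨m, hm, rfl⟩ := hf
  subst hm
  induction m using Multiset.induction_on with
  | empty =>
      simp only [Multiset.map_zero, Multiset.prod_zero, Multiset.card_zero]
      exact isWeightedHomogeneous_one ℂ (wt c)
  | cons a s ih =>
      rw [Multiset.map_cons, Multiset.prod_cons, Multiset.card_cons]
      have := (z_hom a).mul ih
      convert this using 2 <;>
        simp [Prod.ext_iff, add_comm]

lemma mul_mem_Mon {e f : ℕ} {x y : Rc c} (hx : x ∈ Mon c e) (hy : y ∈ Mon c f) :
    x * y ∈ Mon c (e + f) := by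
  obtain ⟨m, hm, rfl⟩ := hx
  obtain ⟨m', hm', rfl⟩ := hy
  exact ⟨m + m', by simp [hm, hm'], by simp [Multiset.prod_add]⟩

lemma zpow_mem_Mon (p : Fin 4 × Fin c) (N : ℕ) : (z c p) ^ N ∈ Mon c N :=
  ⟨Multiset.replicate N p, by simp, by simp [Multiset.map_replicate, Multiset.prod_replicate]⟩


/-- every monomial of bidegree (e,e) is an actual product of e Segre generators -/
lemma monomial_mem_Mon : ∀ (e : ℕ) (u : σt c →₀ ℕ), weight (wt c) u = (e, e) →
    (monomial u 1 : Rc c) ∈ Mon c e := by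
  intro e
  induction e with
  | zero =>
      intro u hu
      have h1 := weight_fst (c := c) u
      have h2 := weight_snd (c := c) u
      rw [hu] at h1 h2
      have hu0 : u = 0 := by
        ext s
        rcases s with i | j
        · have := Finset.sum_eq_zero_iff.mp h1.symm i (Finset.mem_univ i)
          simpa using this
        · have := Finset.sum_eq_zero_iff.mp h2.symm j (Finset.mem_univ j)
          simpa using this
      subst hu0
      refine ⟨0, by simp, by simp⟩
  | succ e ih =>
      intro u hu
      have h1 := weight_fst (c := c) u
      have h2 := weight_snd (c := c) u
      rw [hu] at h1 h2
      obtain ⟨i, hi⟩ : ∃ i : Fin 4, u (Sum.inl i) ≠ 0 := by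
        by_contra h
        push_neg at h
        simp [h] at h1
      obtain ⟨j, hj⟩ : ∃ j : Fin c, u (Sum.inr j) ≠ 0 := by
        by_contra h
        push_neg at h
        simp [h] at h2
      set v : σt c →₀ ℕ := Finsupp.single (Sum.inl i) 1 + Finsupp.single (Sum.inr j) 1 with hv
      have hle : v ≤ u := by
        rw [Finsupp.le_iff]
        intro s hs
        rcases s with i' | j'
        · by_cases h : i' = i
          · subst h
            have : v (Sum.inl i') = 1 := by simp [hv]
            omega
          · have : v (Sum.inl i') = 0 := by
              simp only [hv, Finsupp.add_apply, Finsupp.single_apply]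
              rw [if_neg (by simp only [Sum.inl.injEq]; exact fun hh => h hh.symm),
                if_neg (by simp)]
              rfl
            omega
        · by_cases h : j' = j
          · subst h
            have : v (Sum.inr j') = 1 := by simp [hv]
            omega
          · have : v (Sum.inr j') = 0 := by
              simp only [hv, Finsupp.add_apply, Finsupp.single_apply]
              rw [if_neg (by simp),
                if_neg (by simp only [Sum.inr.injEq]; exact fun hh => h hh.symm)]
              rfl
            omega
      obtain ⟨u', rfl⟩ := exists_add_of_le hle
      have hsingle : ∀ s : σt c, weight (wt c) (Finsupp.single s 1) = wt c s := by
        intro s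
        rw [weight_apply, Finsupp.sum_single_index (by simp)]
        simp
      have hwv : weight (wt c) v = ((1 : ℕ), (1 : ℕ)) := by
        rw [hv, map_add, hsingle, hsingle]
        simp [wt]
      have hwu' : weight (wt c) u' = (e, e) := by
        have := hu
        rw [map_add, hwv] at this
        have h1 : 1 + (weight (wt c) u').1 = e + 1 := by
          rw [Prod.ext_iff] at this; simpa using this.1
        have h2 : 1 + (weight (wt c) u').2 = e + 1 := by
          rw [Prod.ext_iff] at this; simpa using this.2
        rw [Prod.ext_iff]
        constructor <;> omega
      obtain ⟨m, hm, hprod⟩ := ih u' hwu'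
      refine ⟨(i, j) ::ₘ m, by simp [hm], ?_⟩
      rw [Multiset.map_cons, Multiset.prod_cons, ← hprod]
      have : (monomial (v + u') (1 : ℂ)) = monomial v 1 * monomial u' 1 := by
        rw [monomial_mul, one_mul]
      rw [this]
      have hvz : (monomial v (1 : ℂ)) = z c (i, j) := by
        rw [hv, z]
        have : (X (Sum.inl (i,j).1) : Rc c) * X (Sum.inr (i,j).2)
            = monomial (Finsupp.single (Sum.inl i) 1 + Finsupp.single (Sum.inr j) 1) (1*1 : ℂ) := by
          rw [← monomial_mul]
          rfl
        rw [this, mul_one]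
      rw [hvz, mul_comm]

lemma isWH_mem_span_Mon {e : ℕ} {t : Rc c}
    (ht : IsWeightedHomogeneous (wt c) t (e, e)) :
    t ∈ Submodule.span ℂ (Mon c e) := by
  have : t = ∑ u ∈ t.support, monomial u (coeff u t) := (support_sum_monomial_coeff t).symm
  rw [this]
  apply Submodule.sum_mem
  intro u hu
  have hw : weight (wt c) u = (e, e) := ht (MvPolynomial.mem_support_iff.mp hu)
  have : (monomial u (coeff u t) : Rc c) = (coeff u t) • monomial u 1 := by
    rw [smul_monomial, smul_eq_mul, mul_one]

  rw [this]
  exact Submodule.smul_mem _ _ (Submodule.subset_span (monomial_mem_Mon e u hw))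

lemma whc_mul_homog (φ : Rc c) (n' m : ℕ × ℕ)
    (hφ : IsWeightedHomogeneous (wt c) φ n') (t : Rc c) :
    weightedHomogeneousComponent (wt c) (m + n') (t * φ)
      = weightedHomogeneousComponent (wt c) m t * φ := by
  induction t using MvPolynomial.induction_on' with
  | monomial u r =>
      by_cases h : weight (wt c) u = m
      · have hmon : IsWeightedHomogeneous (wt c) (monomial u r : Rc c) m :=
          isWeightedHomogeneous_monomial _ _ _ h
        rw [hmon.weightedHomogeneousComponent_same, (hmon.mul hφ).weightedHomogeneousComponent_same]
      · have hmon : IsWeightedHomogeneous (wt c) (monomial u r : Rc c) (weight (wt c) u) :=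
          isWeightedHomogeneous_monomial _ _ _ rfl
        rw [(hmon.mul hφ).weightedHomogeneousComponent_ne,
          hmon.weightedHomogeneousComponent_ne m (fun hh => h hh.symm), zero_mul]
        intro hcon
        exact h (add_right_cancel hcon.symm)
  | add p q hp hq =>
      rw [add_mul, map_add, hp, hq, map_add, add_mul]

lemma refine_coeffs {b : ℕ} (Bf : Fin b → Rc c)
    (hB : ∀ k, IsWeightedHomogeneous (wt c) (Bf k) (1,1))
    (p : Fin 4 × Fin c) (N : ℕ) (hN : 1 ≤ N)
    (h : (z c p) ^ N ∈ Ideal.span (Set.range Bf)) :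
    ∃ t : Fin b → Rc c, (∀ k, t k ∈ Submodule.span ℂ (Mon c (N-1)))
      ∧ (z c p) ^ N = ∑ k, t k * Bf k := by
  obtain ⟨t', ht'⟩ := Ideal.mem_span_range_iff_exists_fun.mp h
  have hzN : IsWeightedHomogeneous (wt c) ((z c p) ^ N) ((N : ℕ), (N : ℕ)) :=
    Mon_hom (zpow_mem_Mon p N)
  have hNN : ((N : ℕ), (N : ℕ)) = ((N-1 : ℕ), (N-1 : ℕ)) + ((1 : ℕ), (1 : ℕ)) := by
    rw [Prod.mk_add_mk]
    congr 1 <;> omega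
  refine ⟨fun k => weightedHomogeneousComponent (wt c) (N-1, N-1) (t' k), ?_, ?_⟩
  · intro k
    exact isWH_mem_span_Mon (weightedHomogeneousComponent_isWeightedHomogeneous (w := wt c) (n := ((N-1 : ℕ), (N-1 : ℕ))) (φ := t' k))
  · have := congrArg (weightedHomogeneousComponent (wt c) (N, N)) ht'
    rw [hzN.weightedHomogeneousComponent_same] at this
    rw [← this, map_sum]
    apply Finset.sum_congr rfl
    intro k _
    rw [hNN, whc_mul_homog (Bf k) _ _ (hB k)]

/-- spanning set: products of `Bf`'s and at most `E` Segre generators -/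
def W {b : ℕ} (Bf : Fin b → Rc c) (E d : ℕ) : Set (Rc c) :=
  {f | ∃ (γ : Multiset (Fin b)) (m : Multiset (Fin 4 × Fin c)),
      Multiset.card m ≤ E ∧ Multiset.card γ + Multiset.card m = d ∧
      f = (γ.map Bf).prod * (m.map (z c)).prod}

lemma mul_right_span {s : Set (Rc c)} {a : Rc c} {V : Submodule ℂ (Rc c)}
    (h : ∀ y ∈ s, y * a ∈ V) {x : Rc c} (hx : x ∈ Submodule.span ℂ s) : x * a ∈ V := by
  have hs : s ⊆ (V.comap (LinearMap.mulRight ℂ a) : Set (Rc c)) := h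
  exact Submodule.span_le.mpr hs hx

lemma mul_left_span {s : Set (Rc c)} {a : Rc c} {V : Submodule ℂ (Rc c)}
    (h : ∀ y ∈ s, a * y ∈ V) {x : Rc c} (hx : x ∈ Submodule.span ℂ s) : a * x ∈ V := by
  have hs : s ⊆ (V.comap (LinearMap.mulLeft ℂ a) : Set (Rc c)) := h
  exact Submodule.span_le.mpr hs hx

lemma sum_count_eq_card {ι : Type*} [Fintype ι] [DecidableEq ι] (m : Multiset ι) :
    ∑ p : ι, m.count p = Multiset.card m := by
  rw [← Multiset.toFinset_sum_count_eq m]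
  symm
  apply Finset.sum_subset (Finset.subset_univ _)
  intro p _ hp
  simpa [Multiset.count_eq_zero] using fun hc => hp (Multiset.mem_toFinset.mpr hc)

lemma mon_subset_spanW (hc : 1 ≤ c) {b : ℕ} (Bf : Fin b → Rc c) (N : ℕ) (hN : 1 ≤ N)
    (hkey : ∀ p, ∃ t : Fin b → Rc c,
      (∀ k, t k ∈ Submodule.span ℂ (Mon c (N-1))) ∧ (z c p) ^ N = ∑ k, t k * Bf k) :
    ∀ d, Mon c d ⊆ (Submodule.span ℂ (W Bf (4*c*(N-1)) d) : Set (Rc c)) := by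
  set E := 4*c*(N-1) with hE
  intro d
  induction d using Nat.strong_induction_on with
  | _ d ih =>
  intro f hf
  obtain ⟨m, hmcard, rfl⟩ := hf
  by_cases hd : d ≤ E
  · apply Submodule.subset_span
    exact ⟨0, m, by omega, by simpa using hmcard, by simp⟩
  -- pigeonhole
  push_neg at hd
  obtain ⟨p, hp⟩ : ∃ p : Fin 4 × Fin c, N ≤ m.count p := by
    by_contra h
    push_neg at h
    have : ∑ p : Fin 4 × Fin c, m.count p ≤ ∑ _p : Fin 4 × Fin c, (N-1) :=
      Finset.sum_le_sum fun p _ => by have := h p; omega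
    rw [sum_count_eq_card, hmcard] at this
    simp only [Finset.sum_const, Finset.card_univ, Fintype.card_prod, Fintype.card_fin,
      smul_eq_mul] at this
    omega
  have hrep : Multiset.replicate N p ≤ m := (Multiset.le_count_iff_replicate_le).mp hp
  obtain ⟨m', rfl⟩ := Multiset.le_iff_exists_add.mp hrep
  have hm'card : Multiset.card m' = d - N := by
    rw [← hmcard]
    simp [Multiset.card_replicate]
  have hNd : N ≤ d := by
    have : N - 1 ≤ E := by
      calc N - 1 = 1 * 1 * (N-1) := by ring
      _ ≤ 4 * c * (N-1) := by
          apply Nat.mul_le_mul_right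
          apply Nat.mul_le_mul <;> omega
    omega
  -- factor the product
  have hfact : ((Multiset.replicate N p + m').map (z c)).prod
      = (z c p) ^ N * (m'.map (z c)).prod := by
    rw [Multiset.map_add, Multiset.prod_add, Multiset.map_replicate, Multiset.prod_replicate]
  rw [hfact]
  obtain ⟨t, htmem, hteq⟩ := hkey p
  rw [hteq, Finset.sum_mul]
  apply Submodule.sum_mem
  intro k _
  have hassoc : t k * Bf k * (Multiset.map (z c) m').prod
      = t k * (Bf k * (Multiset.map (z c) m').prod) := by ring
  rw [hassoc]
  -- t k ∈ span (Mon (N-1)); multiply on the right by Bf k * prod m'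
  apply mul_right_span (s := Mon c (N-1)) ?_ (htmem k)
  intro y hy
  have hyg : y * (Bf k * (Multiset.map (z c) m').prod)
      = Bf k * (y * (Multiset.map (z c) m').prod) := by ring
  rw [hyg]
  have hymem : y * (Multiset.map (z c) m').prod ∈ Mon c (d-1) := by
    have hm'' : (Multiset.map (z c) m').prod ∈ Mon c (d - N) := ⟨m', hm'card, rfl⟩
    have := mul_mem_Mon hy hm''
    have harith : (N - 1) + (d - N) = d - 1 := by omega
    rwa [harith] at this
  have hspan := ih (d-1) (by omega) hymem
  apply mul_left_span (s := W Bf E (d-1)) ?_ hspan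
  intro w hw
  obtain ⟨γ, mm, h1, h2, rfl⟩ := hw
  apply Submodule.subset_span
  refine ⟨k ::ₘ γ, mm, h1, by simp [Multiset.card_cons]; omega, ?_⟩
  rw [Multiset.map_cons, Multiset.prod_cons]
  ring

/-- encode a multiset of card ≤ E as a function `Fin E → Option _`, remembering the card -/
lemma enc_z : ∀ (E : ℕ) (m : Multiset (Fin 4 × Fin c)), Multiset.card m ≤ E →
    ∃ wf : Fin E → Option (Fin 4 × Fin c),
      (∑ e : Fin E, (wf e).elim 0 (fun _ => 1)) = Multiset.card m ∧
      (m.map (z c)).prod = ∏ e : Fin E, (wf e).elim 1 (z c) := by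
  intro E
  induction E with
  | zero =>
      intro m hm
      have : m = 0 := by
        rw [← Multiset.card_eq_zero]; omega
      subst this
      exact ⟨fun e => none, by simp, by simp⟩
  | succ E ihE =>
      intro m hm
      rcases Multiset.empty_or_exists_mem m with h0 | ⟨a, ha⟩
      · subst h0
        refine ⟨fun _ => none, by simp, by simp⟩
      · obtain ⟨m', rfl⟩ : ∃ m', m = a ::ₘ m' := ⟨m.erase a, (Multiset.cons_erase ha).symm⟩
        have hm' : Multiset.card m' ≤ E := by
          rw [Multiset.card_cons] at hm; omega
        obtain ⟨wf', hwc, hwp⟩ := ihE m' hm'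
        refine ⟨Fin.cons (some a) wf', ?_, ?_⟩
        · rw [Fin.sum_univ_succ]
          simp only [Fin.cons_zero, Fin.cons_succ]
          rw [show ((some a).elim 0 fun _ => (1:ℕ)) = 1 from rfl, hwc, Multiset.card_cons]
          omega
        · rw [Fin.prod_univ_succ]
          simp only [Fin.cons_zero, Fin.cons_succ]
          rw [Multiset.map_cons, Multiset.prod_cons, hwp]
          rfl

lemma enc_B {b : ℕ} (Bf : Fin b → Rc c) (γ : Multiset (Fin b)) :
    (γ.map Bf).prod = ∏ k : Fin b, Bf k ^ γ.count k := by
  rw [Finset.prod_multiset_map_count]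
  apply Finset.prod_subset (Finset.subset_univ _)
  intro k _ hk
  have : γ.count k = 0 := by
    simpa [Multiset.count_eq_zero] using fun hcmem => hk (Multiset.mem_toFinset.mpr hcmem)
  simp [this]

/-- explicit finite parametrization of a spanning set -/
def Ffun {b' : ℕ} (Bf : Fin (b'+1) → Rc c) (E d : ℕ)
    (gw : (Fin b' → Fin (d+1)) × (Fin E → Option (Fin 4 × Fin c))) : Rc c :=
  (∏ k : Fin b', Bf k.castSucc ^ (gw.1 k : ℕ))
    * Bf (Fin.last b') ^ (d - (∑ e : Fin E, (gw.2 e).elim 0 fun _ => 1) - ∑ k : Fin b', (gw.1 k : ℕ))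
    * ∏ e : Fin E, (gw.2 e).elim 1 (z c)

lemma W_subset_range {b' : ℕ} (Bf : Fin (b'+1) → Rc c) (E d : ℕ) :
    W Bf E d ⊆ Set.range (Ffun Bf E d) := by
  rintro f ⟨γ, m, hmE, hcard, rfl⟩
  obtain ⟨wf, hwc, hwp⟩ := enc_z E m hmE
  have hcount : ∀ k : Fin (b'+1), γ.count k ≤ d := by
    intro k
    calc γ.count k ≤ Multiset.card γ := Multiset.count_le_card _ _
    _ ≤ d := by omega
  refine ⟨(fun k => ⟨γ.count k.castSucc, by have := hcount k.castSucc; omega⟩, wf), ?_⟩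
  have hsum : (∑ k : Fin b', γ.count k.castSucc) + γ.count (Fin.last b')
      = Multiset.card γ := by
    rw [← sum_count_eq_card γ, Fin.sum_univ_castSucc]
  unfold Ffun
  simp only
  rw [hwc, ← hwp]
  have hexp : d - Multiset.card m - (∑ k : Fin b', γ.count k.castSucc)
      = γ.count (Fin.last b') := by omega
  rw [hexp, enc_B Bf γ, Fin.prod_univ_castSucc]

section Family

variable (c' d q qc : ℕ)

/-- the exponent function of the lower-bound monomial family -/
def uuFun (av : (Fin 3 → Fin (q+1)) × (Fin c' → Fin (qc+1))) : σt (c'+1) → ℕ :=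
  Sum.elim
    (Fin.lastCases (n := 3) (d - ∑ i, (av.1 i : ℕ)) (fun i => (av.1 i : ℕ)))
    (Fin.lastCases (n := c') (d - ∑ j, (av.2 j : ℕ)) (fun j => (av.2 j : ℕ)))

def uu (av : (Fin 3 → Fin (q+1)) × (Fin c' → Fin (qc+1))) : σt (c'+1) →₀ ℕ :=
  Finsupp.equivFunOnFinite.symm (uuFun c' d q qc av)

lemma uu_injective : Function.Injective (uu c' d q qc) := by
  intro a b h
  have h2 : uuFun c' d q qc a = uuFun c' d q qc b :=
    Finsupp.equivFunOnFinite.symm.injective h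
  ext1
  · funext i
    have := congrFun h2 (Sum.inl i.castSucc)
    simp only [uuFun, Sum.elim_inl, Fin.lastCases_castSucc] at this
    exact Fin.val_injective this
  · funext j
    have := congrFun h2 (Sum.inr j.castSucc)
    simp only [uuFun, Sum.elim_inr, Fin.lastCases_castSucc] at this
    exact Fin.val_injective this

lemma uu_weight (h3 : 3 * q ≤ d) (hqc : c' * qc ≤ d)
    (av : (Fin 3 → Fin (q+1)) × (Fin c' → Fin (qc+1))) :
    weight (wt (c'+1)) (uu c' d q qc av) = (d, d) := by
  have hs1 : (∑ i, ((av.1 i : ℕ))) ≤ 3 * q := by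
    calc (∑ i, ((av.1 i : ℕ))) ≤ ∑ _i : Fin 3, q := Finset.sum_le_sum fun i _ => Fin.is_le _
    _ = 3 * q := by simp [Finset.sum_const, mul_comm]
  have hs2 : (∑ j, ((av.2 j : ℕ))) ≤ c' * qc := by
    calc (∑ j, ((av.2 j : ℕ))) ≤ ∑ _j : Fin c', qc := Finset.sum_le_sum fun j _ => Fin.is_le _
    _ = c' * qc := by simp [Finset.sum_const, mul_comm]
  have happ : ∀ s, (uu c' d q qc av) s = uuFun c' d q qc av s := by
    intro s; simp [uu]
  rw [Prod.ext_iff]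
  constructor
  · rw [weight_fst]
    simp only [happ, uuFun, Sum.elim_inl]
    rw [Fin.sum_univ_castSucc (n := 3)]
    simp only [Fin.lastCases_castSucc, Fin.lastCases_last]
    omega
  · rw [weight_snd]
    simp only [happ, uuFun, Sum.elim_inr]
    rw [Fin.sum_univ_castSucc (n := c')]
    simp only [Fin.lastCases_castSucc, Fin.lastCases_last]
    omega

end Family


lemma card_dom (a n b m : ℕ) :
    Fintype.card ((Fin a → Fin n) × (Fin b → Fin m)) = n^a * m^b := by
  simp [Fintype.card_fun]

lemma card_par (b dd E k : ℕ) :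
    Fintype.card ((Fin b → Fin dd) × (Fin E → Option (Fin 4 × Fin k))) = dd^b * (4*k+1)^E := by
  have : 4*k+1 = Fintype.card (Option (Fin 4 × Fin k)) := by
    simp [Fintype.card_option, Nat.mul_comm]
  rw [this]
  simp [Fintype.card_fun]

lemma arith (c' b' mm K q qc d : ℕ) (hb : b' ≤ c' + 2) (hmm1 : 1 ≤ mm)
    (hd : d = 27 * mm^c' * K)
    (hq3 : d + 1 ≤ 3 * (q+1)) (hqm : d + 1 ≤ mm * (qc+1))
    (hmain : (q+1)^3 * (qc+1)^c' ≤ (d+1)^b' * K) : False := by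
  have hpow : (d+1)^(c'+3) ≤ (27 * mm^c' * K) * (d+1)^(c'+2) := by
    calc (d+1)^(c'+3) = (d+1)^3 * (d+1)^c' := by rw [← pow_add]; ring_nf
    _ ≤ (3*(q+1))^3 * (mm*(qc+1))^c' :=
        Nat.mul_le_mul (Nat.pow_le_pow_left hq3 3) (Nat.pow_le_pow_left hqm c')
    _ = (27 * mm^c') * ((q+1)^3 * (qc+1)^c') := by rw [mul_pow, mul_pow]; ring
    _ ≤ (27 * mm^c') * ((d+1)^b' * K) := Nat.mul_le_mul_left _ hmain
    _ ≤ (27 * mm^c') * ((d+1)^(c'+2) * K) := by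
        apply Nat.mul_le_mul_left
        apply Nat.mul_le_mul_right
        exact Nat.pow_le_pow_right (by omega) (by omega)
    _ = (27 * mm^c' * K) * (d+1)^(c'+2) := by ring
  have hfinal : d + 1 ≤ 27 * mm^c' * K := by
    have hpos : 0 < (d+1)^(c'+2) := Nat.pow_pos (by omega)
    have h2 : (d+1)^(c'+2) * (d+1) ≤ (d+1)^(c'+2) * (27 * mm^c' * K) := by
      calc (d+1)^(c'+2) * (d+1) = (d+1)^(c'+3) := by rw [← pow_succ]
      _ ≤ (27 * mm^c' * K) * (d+1)^(c'+2) := hpow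
      _ = (d+1)^(c'+2) * (27 * mm^c' * K) := mul_comm _ _
    exact Nat.le_of_mul_le_mul_left h2 hpos
  omega

/-- The master contradiction: if all Segre generators are in the radical of an ideal
generated by `b'+1 ≤ c'+3` bihomogeneous (1,1) forms, we get `False` by counting. -/
lemma master (c' b' : ℕ) (Bf : Fin (b'+1) → Rc (c'+1)) (hb : b' ≤ c' + 2)
    (hB : ∀ k, IsWeightedHomogeneous (wt (c'+1)) (Bf k) (1,1))
    (hrad : ∀ p : Fin 4 × Fin (c'+1), z (c'+1) p ∈ (Ideal.span (Set.range Bf)).radical) :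
    False := by
  classical
  -- uniform exponent
  choose n hn using fun p => Ideal.mem_radical_iff.mp (hrad p)
  set N : ℕ := Finset.univ.sup (fun p : Fin 4 × Fin (c'+1) => n p + 1) with hNdef
  have hN1 : 1 ≤ N := by
    have h : n ((0 : Fin 4), (0 : Fin (c'+1))) + 1 ≤ N :=
      Finset.le_sup (f := fun p : Fin 4 × Fin (c'+1) => n p + 1)
        (Finset.mem_univ ((0 : Fin 4), (0 : Fin (c'+1))))
    omega
  have hNp : ∀ p, (z (c'+1) p) ^ N ∈ Ideal.span (Set.range Bf) := by
    intro p
    have hle : n p ≤ N := by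
      have h : n p + 1 ≤ N :=
        Finset.le_sup (f := fun p : Fin 4 × Fin (c'+1) => n p + 1) (Finset.mem_univ p)
      omega
    rw [← pow_sub_mul_pow (z (c'+1) p) hle]
    exact Ideal.mul_mem_left _ _ (hn p)
  have hkey : ∀ p, ∃ t : Fin (b'+1) → Rc (c'+1),
      (∀ k, t k ∈ Submodule.span ℂ (Mon (c'+1) (N-1)))
        ∧ (z (c'+1) p) ^ N = ∑ k, t k * Bf k :=
    fun p => refine_coeffs Bf hB p N hN1 (hNp p)
  have hspan := mon_subset_spanW (c := c'+1) (Nat.le_add_left 1 c') Bf N hN1 hkey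
  -- counting setup
  set E : ℕ := 4*(c'+1)*(N-1) with hEdef
  set mm : ℕ := max 1 c' with hmm
  set K : ℕ := (4*(c'+1)+1)^E with hK
  set d : ℕ := 27 * mm^c' * K with hd
  set q : ℕ := d / 3 with hq
  set qc : ℕ := d / mm with hqc
  have h3 : 3 * q ≤ d := by
    have := Nat.div_mul_le_self d 3
    omega
  have hmm1 : 1 ≤ mm := le_max_left _ _
  have hqcle : c' * qc ≤ d := by
    have h1 : qc * mm ≤ d := Nat.div_mul_le_self d mm
    have h2 : c' ≤ mm := le_max_right _ _
    calc c' * qc ≤ mm * qc := Nat.mul_le_mul_right _ h2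
    _ = qc * mm := mul_comm _ _
    _ ≤ d := h1
  -- the linearly independent family
  have hvli : LinearIndependent ℂ
      (fun av => (monomial (uu c' d q qc av) 1 : Rc (c'+1))) := by
    have heq : (fun av => (monomial (uu c' d q qc av) 1 : Rc (c'+1)))
        = (fun s => (monomial s 1 : Rc (c'+1))) ∘ (uu c' d q qc) := rfl
    rw [heq, ← coe_basisMonomials]
    exact (basisMonomials (σt (c'+1)) ℂ).linearIndependent.comp _ (uu_injective c' d q qc)
  set S : Set (Rc (c'+1)) := Set.range (Ffun Bf E d) with hS
  haveI : Fintype ↥S := (Set.finite_range _).fintype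
  have hrange : Set.range (fun av => (monomial (uu c' d q qc av) 1 : Rc (c'+1)))
      ⊆ (Submodule.span ℂ S : Set (Rc (c'+1))) := by
    rintro _ ⟨av, rfl⟩
    have hmon : (monomial (uu c' d q qc av) 1 : Rc (c'+1)) ∈ Mon (c'+1) d :=
      monomial_mem_Mon d (uu c' d q qc av) (uu_weight c' d q qc h3 hqcle av)
    exact Submodule.span_mono (W_subset_range Bf E d) (hspan d hmon)
  have hcard := linearIndependent_le_span' _ hvli S hrange
  rw [Cardinal.mk_fintype, Nat.cast_le] at hcard
  have hcard2 : Fintype.card ↥S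
      ≤ Fintype.card ((Fin b' → Fin (d+1)) × (Fin E → Option (Fin 4 × Fin (c'+1)))) :=
    Fintype.card_range_le _
  rw [card_par] at hcard2
  rw [card_dom] at hcard
  -- final arithmetic
  refine arith c' b' mm K q qc d hb hmm1 hd ?_ ?_ ?_
  · have := Nat.div_add_mod d 3
    omega
  · have h1 : mm * qc + d % mm = d := Nat.div_add_mod d mm
    have h2 : d % mm < mm := Nat.mod_lt _ (by omega)
    calc d + 1 = mm * qc + d % mm + 1 := by rw [h1]
    _ ≤ mm * qc + mm := by omega
    _ = mm * (qc + 1) := by ring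
  · exact le_trans hcard hcard2

end GlobSurjAux

open GlobSurjAux MvPolynomial Finsupp in
/-- If `Σ λᵢ gᵢ : ℂ^b → ℂ^c` is surjective for every nonzero `λ ∈ ℂ⁴` (global
surjectivity) and `c ≥ 1`, then `b ≥ c + 3`. -/
theorem globally_surjective_dim (b c : ℕ) (hc : 1 ≤ c)
    (g : Fin 4 → Matrix (Fin c) (Fin b) ℂ)
    (hsurj : ∀ lam : Fin 4 → ℂ, lam ≠ 0 →
      Function.Surjective (Matrix.mulVecLin (∑ i : Fin 4, lam i • g i))) :
    c + 3 ≤ b := by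
  classical
  by_contra hlt
  push_neg at hlt
  obtain ⟨c', rfl⟩ : ∃ c', c = c' + 1 := ⟨c - 1, by omega⟩
  have hb1 : 1 ≤ b := by
    by_contra hb0
    push_neg at hb0
    have hb : b = 0 := by omega
    subst hb
    have hlam : (fun i : Fin 4 => if i = 0 then (1:ℂ) else 0) ≠ 0 := by
      intro h
      have := congrFun h 0
      simp at this
    obtain ⟨x, hx⟩ := hsurj _ hlam (fun _ => 1)
    have h0 := congrFun hx ⟨0, by omega⟩
    simp [Matrix.mulVecLin_apply, Matrix.mulVec, dotProduct] at h0
  obtain ⟨b', rfl⟩ : ∃ b', b = b' + 1 := ⟨b - 1, by omega⟩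
  set Bf : Fin (b'+1) → Rc (c'+1) :=
    fun k => ∑ p : Fin 4 × Fin (c'+1), C (g p.1 p.2 k) * z (c'+1) p with hBf
  have hB : ∀ k, IsWeightedHomogeneous (wt (c'+1)) (Bf k) (1,1) := by
    intro k
    apply IsWeightedHomogeneous.sum
    intro p _
    have h := (isWeightedHomogeneous_C (wt (c'+1)) (g p.1 p.2 k)).mul (z_hom p)
    rwa [zero_add] at h
  -- evaluation of Bf
  have hBeval : ∀ (x : σt (c'+1) → ℂ) (k : Fin (b'+1)),
      eval x (Bf k) = Matrix.vecMul (fun j => x (Sum.inr j))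
        (∑ i : Fin 4, x (Sum.inl i) • g i) k := by
    intro x k
    have hL : eval x (Bf k)
        = ∑ i : Fin 4, ∑ j : Fin (c'+1), g i j k * (x (Sum.inl i) * x (Sum.inr j)) := by
      rw [hBf]
      simp only [map_sum, map_mul, eval_C, z, eval_X]
      exact Fintype.sum_prod_type _
    rw [hL, Matrix.vecMul, dotProduct]
    rw [Finset.sum_comm]
    apply Finset.sum_congr rfl
    intro j _
    simp only [Matrix.sum_apply, Matrix.smul_apply, smul_eq_mul, Finset.mul_sum]
    apply Finset.sum_congr rfl
    intro i _
    ring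
  -- radical membership via the Nullstellensatz
  have hrad : ∀ p : Fin 4 × Fin (c'+1),
      z (c'+1) p ∈ (Ideal.span (Set.range Bf)).radical := by
    intro p
    rw [← vanishingIdeal_zeroLocus_eq_radical (K := ℂ)]
    rw [mem_vanishingIdeal_iff]
    intro x hx
    have hvan : ∀ k, eval x (Bf k) = 0 := by
      intro k
      exact (mem_zeroLocus_iff.mp hx) (Bf k) (Ideal.subset_span ⟨k, rfl⟩)
    have hzero : (∀ i, x (Sum.inl i) = 0) ∨ (∀ j, x (Sum.inr j) = 0) := by
      by_contra hcon
      push_neg at hcon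
      obtain ⟨⟨i0, hi0⟩, ⟨j0, hj0⟩⟩ := hcon
      set lam : Fin 4 → ℂ := fun i => x (Sum.inl i) with hlam
      set v : Fin (c'+1) → ℂ := fun j => x (Sum.inr j) with hv
      have hlamne : lam ≠ 0 := by
        intro h
        exact hi0 (congrFun h i0)
      obtain ⟨x0, hx0⟩ := hsurj lam hlamne (star v)
      have hvM : Matrix.vecMul v (∑ i : Fin 4, lam i • g i) = 0 := by
        funext k
        rw [← hBeval x k]
        exact hvan k
      have hdot : dotProduct v (Matrix.mulVec (∑ i : Fin 4, lam i • g i) x0) = 0 := by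
        rw [Matrix.dotProduct_mulVec, hvM, zero_dotProduct]
      rw [Matrix.mulVecLin_apply] at hx0
      rw [hx0] at hdot
      have hsum : ∑ j, v j * star (v j) = 0 := hdot
      have hre : ∑ j, Complex.normSq (v j) = 0 := by
        have : ((∑ j, Complex.normSq (v j) : ℝ) : ℂ) = 0 := by
          push_cast
          rw [← hsum]
          apply Finset.sum_congr rfl
          intro j _
          rw [← Complex.mul_conj]
          rfl
        exact_mod_cast this
      have := (Finset.sum_eq_zero_iff_of_nonneg
        (fun j _ => Complex.normSq_nonneg (v j))).mp hre j0 (Finset.mem_univ j0)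
      exact hj0 (Complex.normSq_eq_zero.mp this)
    have : aeval x (z (c'+1) p) = x (Sum.inl p.1) * x (Sum.inr p.2) := by
      simp [z]
    rw [this]
    rcases hzero with h | h
    · rw [h p.1, zero_mul]
    · rw [h p.2, mul_zero]
  exact master c' b' Bf (by omega) hB hrad
end
end
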